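/- Define l_c^{(k)}(x) = (1/k!) · ∂^k/∂c^k [Γ(x)/Γ(x-c)]. Then for all k ≥ 1, (x-1)·(l_c^{(k)}(x) - l_c^{(k)}(x-1)) = c·l_c^{(k)}(x) + l_c^{(k-1)}(x) wherever defined. -/

import Mathlib

open Complex Topology

private lemma gammaRecip_smooth (z : ℂ) {n : WithTop ℕ∞} :
    ContDiff ℂ n (fun c' : ℂ => Complex.Gamma z * (Complex.Gamma (z - c'))⁻¹) := by
  have h : Differentiable ℂ (fun c' : ℂ => Complex.Gamma z * (Complex.Gamma (z - c'))⁻¹) := by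
    apply Differentiable.const_mul
    exact Complex.differentiable_one_div_Gamma.comp ((differentiable_const z).sub differentiable_id)
  exact h.contDiff

private lemma leibniz_id_mul {g : ℂ → ℂ} (hg : ContDiff ℂ ⊤ g) (n : ℕ) (c : ℂ) :
    iteratedDeriv (n + 1) (fun c' : ℂ => c' * g c') c =
      c * iteratedDeriv (n + 1) g c + (n + 1) * iteratedDeriv n g c := by
  have hdiff : ∀ (m : ℕ), Differentiable ℂ (iteratedDeriv m g) := fun m =>
    hg.differentiable_iteratedDeriv m (lt_top_iff_ne_top.mpr (by simp))
  induction n generalizing c with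
  | zero =>
    rw [iteratedDeriv_one]
    have : deriv (fun c' : ℂ => c' * g c') c = deriv (fun y : ℂ => y) c * g c + c * deriv g c :=
      deriv_fun_mul differentiableAt_fun_id ((hg.differentiable (by simp)) c)
    rw [this, deriv_id'']
    simp [iteratedDeriv_one, iteratedDeriv_zero]
    ring
  | succ n ih =>
    rw [iteratedDeriv_succ]
    have hfun : iteratedDeriv (n + 1) (fun c' : ℂ => c' * g c') =
        fun c' => c' * iteratedDeriv (n + 1) g c' + (n + 1) * iteratedDeriv n g c' :=
      funext fun c' => ih c'
    rw [hfun]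
    have h1 : DifferentiableAt ℂ (fun c' : ℂ => c' * iteratedDeriv (n + 1) g c') c :=
      differentiableAt_fun_id.mul ((hdiff (n + 1)) c)
    have h2 : DifferentiableAt ℂ (fun c' : ℂ => ((n : ℂ) + 1) * iteratedDeriv n g c') c :=
      ((hdiff n) c).const_mul _
    rw [deriv_fun_add h1 h2, deriv_fun_mul differentiableAt_fun_id ((hdiff (n + 1)) c),
      deriv_const_mul _ ((hdiff n) c), deriv_id'']
    rw [show deriv (iteratedDeriv (n + 1) g) c = iteratedDeriv (n + 1 + 1) g c from
        (congrFun (iteratedDeriv_succ).symm c),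
      show deriv (iteratedDeriv n g) c = iteratedDeriv (n + 1) g c from
        (congrFun (iteratedDeriv_succ).symm c)]
    push_cast
    ring

/-- The logarithms `l_c^{(k)}(x) = (1/k!) ∂^k/∂c^k (Γ(x)/Γ(x-c))` satisfy
`δ₋₁ l_c^{(k)} = c·l_c^{(k)} + l_c^{(k-1)}` for `k ≥ 1`, wherever defined. -/
theorem logarithm_equation_gamma (c : ℂ) (k : ℕ) (hk : 1 ≤ k) (x : ℂ)
    (h1 : ∀ m : ℕ, x - 1 ≠ -(m : ℂ))
    (h2 : ∀ m : ℕ, x - 1 - c ≠ -(m : ℂ)) :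
    letI l : ℕ → ℂ → ℂ := fun j z =>
      (1 / (j.factorial : ℂ)) *
        iteratedDeriv j (fun c' : ℂ => Complex.Gamma z / Complex.Gamma (z - c')) c
    (x - 1) * (l k x - l k (x - 1)) = c * l k x + l (k - 1) x := by
  obtain ⟨n, rfl⟩ : ∃ n, k = n + 1 := ⟨k - 1, (Nat.succ_pred_eq_of_pos hk).symm⟩
  set G : ℂ → ℂ := fun c' => Complex.Gamma x * (Complex.Gamma (x - c'))⁻¹ with hGdef
  set H : ℂ → ℂ := fun c' => Complex.Gamma (x - 1) * (Complex.Gamma (x - 1 - c'))⁻¹ with hHdef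
  have hGfun : (fun c' : ℂ => Complex.Gamma x / Complex.Gamma (x - c')) = G := by
    funext c'; rw [hGdef, div_eq_mul_inv]
  have hHfun : (fun c' : ℂ => Complex.Gamma (x - 1) / Complex.Gamma (x - 1 - c')) = H := by
    funext c'; rw [hHdef, div_eq_mul_inv]
  have hG : ContDiff ℂ ⊤ G := gammaRecip_smooth x
  have hH : ContDiff ℂ ⊤ H := gammaRecip_smooth (x - 1)
  -- the key local identity
  have hx1 : x - 1 ≠ 0 := by simpa using h1 0
  have hc0 : x - 1 - c ≠ 0 := by simpa using h2 0
  have hkey : (fun c' : ℂ => (x - 1) * (G c' - H c')) =ᶠ[𝓝 c] (fun c' => c' * G c') := by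
    have hopen : IsOpen {c' : ℂ | x - 1 - c' ≠ 0} := by
      have : Continuous fun c' : ℂ => x - 1 - c' := by continuity
      exact isOpen_ne.preimage this
    filter_upwards [hopen.mem_nhds hc0] with c' hc'
    have hv : x - 1 - c' ≠ 0 := hc'
    have hGamx : Complex.Gamma x = (x - 1) * Complex.Gamma (x - 1) := by
      have := Complex.Gamma_add_one (x - 1) hx1
      rw [sub_add_cancel] at this
      exact this
    have hGamxc : Complex.Gamma (x - c') = (x - 1 - c') * Complex.Gamma (x - 1 - c') := by
      have := Complex.Gamma_add_one (x - 1 - c') hv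
      rw [show x - 1 - c' + 1 = x - c' by ring] at this
      exact this
    rw [hGdef, hHdef]
    simp only [hGamx, hGamxc]
    rcases eq_or_ne (Complex.Gamma (x - 1 - c')) 0 with hw | hw
    · simp [hw]
    · field_simp
      ring
  have hiter := hkey.iteratedDeriv_eq (n + 1)
  -- compute LHS iterated derivative
  have hL : iteratedDeriv (n + 1) (fun c' : ℂ => (x - 1) * (G c' - H c')) c =
      (x - 1) * (iteratedDeriv (n + 1) G c - iteratedDeriv (n + 1) H c) := by
    simp only [← iteratedDerivWithin_univ]
    have h' := iteratedDerivWithin_const_mul (n := n + 1) (f := fun c' => G c' - H c') (Set.mem_univ c)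
      uniqueDiffOn_univ (x - 1) ((hG.sub hH).of_le le_top).contDiffWithinAt
    rw [h', show (fun c' => G c' - H c') = G - H from rfl,
      iteratedDerivWithin_sub (Set.mem_univ c) uniqueDiffOn_univ
        (hG.of_le le_top).contDiffWithinAt (hH.of_le le_top).contDiffWithinAt]
  have hR := leibniz_id_mul hG n c
  rw [hL, hR] at hiter
  -- conclude
  simp only [hGfun, hHfun, Nat.add_sub_cancel]
  have hfac : ((n + 1).factorial : ℂ) ≠ 0 := by exact_mod_cast (n + 1).factorial_ne_zero
  have hfac' : ((n).factorial : ℂ) ≠ 0 := by exact_mod_cast n.factorial_ne_zero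
  have hstep : ((n + 1).factorial : ℂ) = ((n : ℂ) + 1) * n.factorial := by
    rw [Nat.factorial_succ]; push_cast; ring
  have hn1 : ((n : ℂ) + 1) ≠ 0 := Nat.cast_add_one_ne_zero n
  have h3 : (1 / (n.factorial : ℂ)) = ((n : ℂ) + 1) * (1 / ((n + 1).factorial : ℂ)) := by
    rw [hstep]; field_simp
  linear_combination (1 / (((n + 1).factorial : ℂ))) * hiter - (iteratedDeriv n G c) * h3
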